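/- arXiv:2210.08789 — 2 statements merged into one kernel-verified Lean document; each statement's English description precedes it below -/
import Mathlib

section
/- The statistics asc (number of ascents) and dist (number of distinct nonzero entries) are equidistributed over the set of inversion sequences of length n, and both are distributed like des over Sₙ (i.e., both are Eulerian). -/
open Finset

/-- The next index (used for descent/ascent definitions). -/
def nxt {n : ℕ} (i : Fin n) : Fin n := ⟨(i.1 + 1) % n, Nat.mod_lt _ i.pos⟩

/-- Number of descents of a permutation of `Fin n`. -/
def desP {n : ℕ} (π : Equiv.Perm (Fin n)) : ℕ :=
  (univ.filter fun i : Fin n => i.1 + 1 < n ∧ π (nxt i) < π i).card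

/-- Number of inverse descents. -/
def idesP {n : ℕ} (π : Equiv.Perm (Fin n)) : ℕ := desP π⁻¹

/-- Number of left-to-right maxima. -/
def lmaxP {n : ℕ} (π : Equiv.Perm (Fin n)) : ℕ :=
  (univ.filter fun i : Fin n => ∀ j, j < i → π j < π i).card

/-- Number of left-to-right minima. -/
def lminP {n : ℕ} (π : Equiv.Perm (Fin n)) : ℕ :=
  (univ.filter fun i : Fin n => ∀ j, j < i → π i < π j).card

/-- Number of right-to-left maxima. -/
def rmaxP {n : ℕ} (π : Equiv.Perm (Fin n)) : ℕ :=
  (univ.filter fun i : Fin n => ∀ j, i < j → π j < π i).card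

/-- Inversion sequences of length `n`, encoded as functions `Fin n → Fin n`
with `s i ≤ i` (0-based version of `0 ≤ sᵢ < i`). -/
def InvSeqs (n : ℕ) : Finset (Fin n → Fin n) :=
  univ.filter fun s => ∀ i : Fin n, (s i : ℕ) ≤ i.1

/-- Number of ascents of an inversion sequence. -/
def ascI {n : ℕ} (s : Fin n → Fin n) : ℕ :=
  (univ.filter fun i : Fin n => i.1 + 1 < n ∧ s i < s (nxt i)).card

/-- Number of distinct (nonzero) entries: `|{s₁,…,sₙ}| - 1`. -/
def distI {n : ℕ} (s : Fin n → Fin n) : ℕ := (univ.image s).card - 1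

/-- Number of zero entries. -/
def zeroI {n : ℕ} (s : Fin n → Fin n) : ℕ :=
  (univ.filter fun i : Fin n => (s i : ℕ) = 0).card

/-- Number of maximal entries (`sᵢ = i - 1`, 0-based `s i = i`). -/
def maxI {n : ℕ} (s : Fin n → Fin n) : ℕ :=
  (univ.filter fun i : Fin n => (s i : ℕ) = i.1).card

/-- The set of values of right-to-left minima. -/
def rminValues {n : ℕ} (s : Fin n → Fin n) : Finset ℕ :=
  (univ.filter fun i : Fin n => ∀ j, i < j → s i < s j).image fun i => (s i : ℕ)

/-- Number of right-to-left minima values. -/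
def rminI {n : ℕ} (s : Fin n → Fin n) : ℕ := (rminValues s).card

/-- Number of initial consecutive zeros. -/
def czeroI {n : ℕ} (s : Fin n → Fin n) : ℕ :=
  (univ.filter fun i : Fin n => ∀ j, j ≤ i → (s j : ℕ) = 0).card

/-- Length of the initial run of maximal entries `0,1,2,…`. -/
def cmaxI {n : ℕ} (s : Fin n → Fin n) : ℕ :=
  (univ.filter fun i : Fin n => ∀ j, j ≤ i → (s j : ℕ) = j.1).card

/-- The entry after the last zero (0 if `s` ends with a zero). -/
def ealzI {n : ℕ} (s : Fin n → Fin n) : ℕ :=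
  (univ.filter fun i : Fin n => (s i : ℕ) = 0 ∧ ∀ j, i < j → (s j : ℕ) ≠ 0).sum
    fun i => if h : i.1 + 1 < n then (s ⟨i.1 + 1, h⟩ : ℕ) else 0

/-- The entry after the last maximal entry of the initial run (0 if none). -/
def ealmI {n : ℕ} (s : Fin n → Fin n) : ℕ :=
  if h : cmaxI s < n then (s ⟨cmaxI s, h⟩ : ℕ) else 0

/-- The reverse of the complement of `π`. -/
def crev {n : ℕ} (π : Equiv.Perm (Fin n)) : Equiv.Perm (Fin n) :=
  Fin.revPerm * π * Fin.revPerm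

lemma card_invSeqs (n : ℕ) : (InvSeqs n).card = n.factorial := by
  have : InvSeqs n = Fintype.piFinset (fun i : Fin n => univ.filter fun v : Fin n => v.1 ≤ i.1) := by
    ext s
    simp [InvSeqs, Fintype.mem_piFinset]
  rw [this, Fintype.card_piFinset]
  have h1 : ∀ i : Fin n, (univ.filter fun v : Fin n => v.1 ≤ i.1).card = i.1 + 1 := by
    intro i
    have : (univ.filter fun v : Fin n => v.1 ≤ i.1) = Finset.Iic i := by
      ext v; simp only [Finset.mem_filter, Finset.mem_univ, true_and, Finset.mem_Iic, Fin.le_def]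
    rw [this, Fin.card_Iic]
  simp_rw [h1]
  rw [← Finset.prod_range_add_one_eq_factorial n, ← Fin.prod_univ_eq_prod_range (fun x => x + 1)]

lemma lcode_bound {n : ℕ} (π : Equiv.Perm (Fin n)) (i : Fin n) :
    (univ.filter fun j => j < i ∧ π i < π j).card ≤ i.1 := by
  calc (univ.filter fun j => j < i ∧ π i < π j).card
      ≤ (Finset.Iio i).card := by
        apply Finset.card_le_card
        intro j hj
        simp only [Finset.mem_filter] at hj
        simpa using hj.2.1
    _ = i.1 := Fin.card_Iio i

def lcode {n : ℕ} (π : Equiv.Perm (Fin n)) : Fin n → Fin n :=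
  fun i => ⟨(univ.filter fun j => j < i ∧ π i < π j).card,
    lt_of_le_of_lt (lcode_bound π i) i.isLt⟩

lemma lcode_mem {n : ℕ} (π : Equiv.Perm (Fin n)) : lcode π ∈ InvSeqs n := by
  simp only [InvSeqs, Finset.mem_filter, Finset.mem_univ, true_and]
  exact fun i => lcode_bound π i

lemma nxt_eq {n : ℕ} (i : Fin n) (h : i.1 + 1 < n) : (nxt i) = ⟨i.1 + 1, h⟩ := by
  simp [nxt, Nat.mod_eq_of_lt h]

lemma asc_lcode {n : ℕ} (π : Equiv.Perm (Fin n)) : ascI (lcode π) = desP π := by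
  unfold ascI desP
  congr 1
  apply Finset.filter_congr
  intro i _
  constructor
  · rintro ⟨h, hlt⟩
    refine ⟨h, ?_⟩
    by_contra hc
    push_neg at hc
    -- π i ≤ π (nxt i); since nxt i ≠ i, π i < π (nxt i)
    have hne : nxt i ≠ i := by
      rw [nxt_eq i h]; intro he
      have := congrArg Fin.val he; simp at this
    have hlt2 : π i < π (nxt i) := lt_of_le_of_ne hc (fun he => hne (π.injective he.symm))
    -- then lcode (nxt i) ≤ lcode i
    have hsub : (univ.filter fun j => j < nxt i ∧ π (nxt i) < π j) ⊆
        (univ.filter fun j => j < i ∧ π i < π j) := by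
      intro j hj
      simp only [Finset.mem_filter, Finset.mem_univ, true_and] at hj ⊢
      have hj1 : j.1 < i.1 + 1 := by
        have := hj.1; rw [nxt_eq i h] at this; exact this
      have hjne : j ≠ i := by
        intro he; subst he; exact absurd hj.2 (not_lt.mpr (le_of_lt hlt2))
      refine ⟨?_, lt_trans hlt2 hj.2⟩
      have hv : j.1 < i.1 :=
        lt_of_le_of_ne (Nat.lt_succ_iff.mp hj1) (fun hv => hjne (Fin.ext hv))
      exact Fin.lt_def.mpr hv
    have := Finset.card_le_card hsub
    rw [Fin.lt_def] at hlt
    simp only [lcode] at hlt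
    omega
  · rintro ⟨h, hlt⟩
    refine ⟨h, ?_⟩
    -- π (nxt i) < π i ⇒ insert i A ⊆ B
    have hsub : insert i (univ.filter fun j => j < i ∧ π i < π j) ⊆
        (univ.filter fun j => j < nxt i ∧ π (nxt i) < π j) := by
      intro j hj
      simp only [Finset.mem_insert, Finset.mem_filter, Finset.mem_univ, true_and] at hj ⊢
      rcases hj with rfl | ⟨hj1, hj2⟩
      · exact ⟨by rw [nxt_eq j h]; exact Fin.lt_def.mpr (Nat.lt_succ_self _), hlt⟩
      · exact ⟨lt_trans hj1 (by rw [nxt_eq i h]; exact Fin.lt_def.mpr (Nat.lt_succ_self _)),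
          lt_trans hlt hj2⟩
    have hni : i ∉ (univ.filter fun j => j < i ∧ π i < π j) := by
      simp
    have := Finset.card_le_card hsub
    rw [Finset.card_insert_of_notMem hni] at this
    rw [Fin.lt_def]
    simp only [lcode]
    omega

lemma lcode_card_eq {n : ℕ} (π : Equiv.Perm (Fin n)) (i : Fin n) :
    (((Finset.Iic i).image π).filter fun x => π i < x).card = (lcode π i).1 := by
  have himg : ((Finset.Iic i).image π).filter (fun x => π i < x) =
      (univ.filter fun j => j < i ∧ π i < π j).image π := by
    ext x
    simp only [Finset.mem_filter, Finset.mem_image, Finset.mem_Iic, Finset.mem_univ, true_and]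
    constructor
    · rintro ⟨⟨j, hj1, rfl⟩, hj2⟩
      refine ⟨j, ⟨?_, hj2⟩, rfl⟩
      exact lt_of_le_of_ne hj1 (fun he => absurd hj2 (by subst he; exact lt_irrefl _))
    · rintro ⟨j, ⟨hj1, hj2⟩, rfl⟩
      exact ⟨⟨j, le_of_lt hj1, rfl⟩, hj2⟩
  rw [himg, Finset.card_image_of_injective _ π.injective]
  rfl

lemma lcode_aux {n : ℕ} (π σ : Equiv.Perm (Fin n)) (i : Fin n)
    (hP : (Finset.Iic i).image π = (Finset.Iic i).image σ)
    (hlt : π i < σ i)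
    (hc : lcode π i = lcode σ i) : False := by
  have h1 := lcode_card_eq π i
  have h2 := lcode_card_eq σ i
  rw [← hP] at h2
  have hcv : (lcode π i).1 = (lcode σ i).1 := congrArg Fin.val hc
  have hsub : insert (σ i) (((Finset.Iic i).image π).filter fun x => σ i < x) ⊆
      ((Finset.Iic i).image π).filter fun x => π i < x := by
    intro x hx
    simp only [Finset.mem_insert, Finset.mem_filter] at hx ⊢
    rcases hx with rfl | ⟨hx1, hx2⟩
    · refine ⟨?_, hlt⟩
      rw [hP]
      exact Finset.mem_image.mpr ⟨i, Finset.mem_Iic.mpr le_rfl, rfl⟩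
    · exact ⟨hx1, lt_trans hlt hx2⟩
  have hni : σ i ∉ (((Finset.Iic i).image π).filter fun x => σ i < x) := by
    simp
  have := Finset.card_le_card hsub
  rw [Finset.card_insert_of_notMem hni] at this
  omega

lemma lcode_inj {n : ℕ} : Function.Injective (lcode (n := n)) := by
  intro π σ h
  by_contra hne
  have hD : (univ.filter fun i : Fin n => π i ≠ σ i).Nonempty := by
    rw [Finset.filter_nonempty_iff]
    by_contra hc
    push_neg at hc
    exact hne (Equiv.ext fun i => hc i (Finset.mem_univ i))
  set D := univ.filter fun i : Fin n => π i ≠ σ i with hDdef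
  set i := D.max' hD with hidef
  have hiD : i ∈ D := D.max'_mem hD
  have hine : π i ≠ σ i := by
    have := hiD; rw [hDdef] at this; simpa using this
  have htail : ∀ j, i < j → π j = σ j := by
    intro j hj
    by_contra hc
    have hjD : j ∈ D := by rw [hDdef]; simpa using hc
    exact absurd (D.le_max' j hjD) (not_le.mpr hj)
  have hP : (Finset.Iic i).image π = (Finset.Iic i).image σ := by
    ext x
    have key : ∀ τ : Equiv.Perm (Fin n), x ∈ (Finset.Iic i).image τ ↔ ¬ ∃ j, i < j ∧ τ j = x := by
      intro τ
      simp only [Finset.mem_image, Finset.mem_Iic]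
      constructor
      · rintro ⟨j, hj, rfl⟩ ⟨j', hj', he⟩
        have : j' = j := τ.injective he
        subst this
        exact absurd hj (not_le.mpr hj')
      · intro hno
        refine ⟨τ.symm x, ?_, τ.apply_symm_apply x⟩
        by_contra hc
        push_neg at hc
        exact hno ⟨τ.symm x, hc, τ.apply_symm_apply x⟩
    rw [key π, key σ]
    constructor
    · intro h1 ⟨j, hj, he⟩
      exact h1 ⟨j, hj, by rw [htail j hj]; exact he⟩
    · intro h1 ⟨j, hj, he⟩
      exact h1 ⟨j, hj, by rw [← htail j hj]; exact he⟩
  have hci : lcode π i = lcode σ i := congrFun h i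
  rcases lt_trichotomy (π i) (σ i) with hlt | heq | hgt
  · exact lcode_aux π σ i hP hlt hci
  · exact hine heq
  · exact lcode_aux σ π i hP.symm hgt hci.symm

def dset {n : ℕ} (π : Equiv.Perm (Fin n)) (v : Fin n) : Finset (Fin n) :=
  univ.filter fun j => π.symm v < j ∧ π j < v

lemma mem_dset {n : ℕ} {π : Equiv.Perm (Fin n)} {v j : Fin n} :
    j ∈ dset π v ↔ π.symm v < j ∧ π j < v := by
  simp [dset]

def dcode {n : ℕ} (π : Equiv.Perm (Fin n)) : Fin n → Fin n :=
  fun v =>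
    if h : (dset π v).Nonempty then
      ⟨(π ((dset π v).min' h)).1 + 1, by
        have hm := mem_dset.mp ((dset π v).min'_mem h)
        have h2 : (π ((dset π v).min' h)).1 < v.1 := hm.2
        have := v.isLt
        omega⟩
    else ⟨0, v.pos⟩

lemma dcode_le {n : ℕ} (π : Equiv.Perm (Fin n)) (v : Fin n) : (dcode π v).1 ≤ v.1 := by
  unfold dcode
  split
  · rename_i h
    have hm := mem_dset.mp ((dset π v).min'_mem h)
    have h2 : (π ((dset π v).min' h)).1 < v.1 := hm.2
    simpa using h2
  · simp

lemma dcode_mem {n : ℕ} (π : Equiv.Perm (Fin n)) : dcode π ∈ InvSeqs n := by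
  simp only [InvSeqs, Finset.mem_filter, Finset.mem_univ, true_and]
  exact fun v => dcode_le π v

lemma dcode_val_pos {n : ℕ} (π : Equiv.Perm (Fin n)) (v : Fin n)
    (h : (dset π v).Nonempty) : (dcode π v).1 = (π ((dset π v).min' h)).1 + 1 := by
  unfold dcode
  rw [dif_pos h]

lemma dcode_val_neg {n : ℕ} (π : Equiv.Perm (Fin n)) (v : Fin n)
    (h : ¬ (dset π v).Nonempty) : (dcode π v).1 = 0 := by
  unfold dcode
  rw [dif_neg h]

lemma dset_min' {n : ℕ} (π : Equiv.Perm (Fin n)) (i : Fin n) (h1 : i.1 + 1 < n)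
    (h2 : π (nxt i) < π i) :
    ∃ h : (dset π (π i)).Nonempty, (dset π (π i)).min' h = nxt i := by
  have hsym : π.symm (π i) = i := π.symm_apply_apply i
  have hlt : i < nxt i := by
    rw [nxt_eq i h1]; exact Fin.lt_def.mpr (Nat.lt_succ_self _)
  have hmem : nxt i ∈ dset π (π i) := mem_dset.mpr (by rw [hsym]; exact ⟨hlt, h2⟩)
  refine ⟨⟨_, hmem⟩, ?_⟩
  apply le_antisymm
  · exact Finset.min'_le _ _ hmem
  · apply Finset.le_min'
    intro y hy
    have hy' := mem_dset.mp hy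
    rw [hsym] at hy'
    rw [nxt_eq i h1]
    exact Fin.le_def.mpr (Nat.succ_le_of_lt (Fin.lt_def.mp hy'.1))

lemma dcode_desc {n : ℕ} (π : Equiv.Perm (Fin n)) (i : Fin n) (h1 : i.1 + 1 < n)
    (h2 : π (nxt i) < π i) :
    (dcode π (π i)).1 = (π (nxt i)).1 + 1 := by
  obtain ⟨h, hmin⟩ := dset_min' π i h1 h2
  rw [dcode_val_pos π (π i) h, hmin]

lemma dset_pred_desc {n : ℕ} (π : Equiv.Perm (Fin n)) (v : Fin n)
    (hne : (dset π v).Nonempty) (i : Fin n)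
    (hi : i.1 + 1 = ((dset π v).min' hne).1) :
    π ((dset π v).min' hne) < π i := by
  have hm := mem_dset.mp ((dset π v).min'_mem hne)
  rcases eq_or_ne i (π.symm v) with heq | hne'
  · rw [heq, π.apply_symm_apply]
    exact hm.2
  · have hsle : (π.symm v).1 ≤ i.1 := by
      have := Fin.lt_def.mp hm.1
      omega
    have hslt : π.symm v < i := Fin.lt_def.mpr
      (lt_of_le_of_ne hsle (fun he => hne' (Fin.ext he.symm)))
    have hiltj : i < (dset π v).min' hne := Fin.lt_def.mpr (by omega)
    have hni : i ∉ dset π v := fun hc =>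
      absurd (Finset.min'_le _ _ hc) (not_le.mpr hiltj)
    have hge : ¬ (π i < v) := fun hc => hni (mem_dset.mpr ⟨hslt, hc⟩)
    exact lt_of_lt_of_le hm.2 (not_lt.mp hge)

lemma dist_dcode {n : ℕ} (π : Equiv.Perm (Fin n)) : distI (dcode π) = desP π := by
  rcases Nat.eq_zero_or_pos n with rfl | hn
  · simp [distI, desP]
  have hzero : (⟨0, hn⟩ : Fin n) ∈ univ.image (dcode π) := by
    have hempty : ¬ (dset π (π ⟨n - 1, by omega⟩)).Nonempty := by
      rintro ⟨j, hj⟩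
      have hj' := mem_dset.mp hj
      rw [π.symm_apply_apply] at hj'
      have h1 : n - 1 < j.1 := Fin.lt_def.mp hj'.1
      have := j.isLt
      omega
    have hlast : dcode π (π ⟨n - 1, by omega⟩) = ⟨0, hn⟩ :=
      Fin.ext (dcode_val_neg π _ hempty)
    exact Finset.mem_image.mpr ⟨π ⟨n - 1, by omega⟩, Finset.mem_univ _, hlast⟩
  have hcard : ((univ.image (dcode π)).erase ⟨0, hn⟩).card =
      (univ.filter fun i : Fin n => i.1 + 1 < n ∧ π (nxt i) < π i).card := by
    symm
    apply Finset.card_bij (fun i _ => dcode π (π i))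
    · intro i hi
      simp only [Finset.mem_filter, Finset.mem_univ, true_and] at hi
      rw [Finset.mem_erase]
      refine ⟨?_, Finset.mem_image.mpr ⟨π i, Finset.mem_univ _, rfl⟩⟩
      intro he
      have := congrArg Fin.val he
      rw [dcode_desc π i hi.1 hi.2] at this
      simp at this
    · intro i hi i' hi' he
      simp only [Finset.mem_filter, Finset.mem_univ, true_and] at hi hi'
      have hv := congrArg Fin.val he
      rw [dcode_desc π i hi.1 hi.2, dcode_desc π i' hi'.1 hi'.2] at hv
      have h1 : π (nxt i) = π (nxt i') := Fin.ext (by omega)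
      have h2 : (nxt i).1 = (nxt i').1 := congrArg Fin.val (π.injective h1)
      rw [nxt_eq i hi.1, nxt_eq i' hi'.1] at h2
      exact Fin.ext (by simpa using h2)
    · intro x hx
      rw [Finset.mem_erase] at hx
      obtain ⟨hx0, hximg⟩ := hx
      obtain ⟨v, _, hv⟩ := Finset.mem_image.mp hximg
      have hne : (dset π v).Nonempty := by
        by_contra hc
        apply hx0
        rw [← hv]
        exact Fin.ext (dcode_val_neg π v hc)
      have hm := mem_dset.mp ((dset π v).min'_mem hne)
      obtain ⟨j₀, hj₀⟩ : ∃ j₀ : Fin n, (dset π v).min' hne = j₀ := ⟨_, rfl⟩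
      rw [hj₀] at hm
      have hj₀pos : 0 < j₀.1 := lt_of_le_of_lt (Nat.zero_le _) (Fin.lt_def.mp hm.1)
      have hj₀lt : j₀.1 < n := j₀.isLt
      obtain ⟨i, hi1⟩ : ∃ i : Fin n, i.1 + 1 = j₀.1 :=
        ⟨⟨j₀.1 - 1, by omega⟩, by simp only []; omega⟩
      have hn1 : i.1 + 1 < n := by omega
      have hnxt : nxt i = j₀ := by
        rw [nxt_eq i hn1]
        exact Fin.ext hi1
      have hdesc0 : π ((dset π v).min' hne) < π i :=
        dset_pred_desc π v hne i (by rw [hj₀]; exact hi1)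
      rw [hj₀] at hdesc0
      have hdesc : π (nxt i) < π i := by rw [hnxt]; exact hdesc0
      refine ⟨i, ?_, ?_⟩
      · simp only [Finset.mem_filter, Finset.mem_univ, true_and]
        exact ⟨hn1, hdesc⟩
      · apply Fin.ext
        rw [dcode_desc π i hn1 hdesc, hnxt, ← hv, dcode_val_pos π v hne, hj₀]
  unfold distI desP
  rw [← hcard, ← Finset.card_erase_add_one hzero]
  omega

lemma dcode_aux {n : ℕ} (π σ : Equiv.Perm (Fin n)) (h : dcode π = dcode σ)
    (v u : Fin n) (hu : u < v)
    (hπ : π.symm v < π.symm u) (hσ : σ.symm u < σ.symm v)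
    (hmin : ∀ v' u' : Fin n, u' < v' → v' < v →
      ((π.symm u' < π.symm v') ↔ (σ.symm u' < σ.symm v'))) : False := by
  have hmemu : π.symm u ∈ dset π v :=
    mem_dset.mpr ⟨hπ, by rw [π.apply_symm_apply]; exact hu⟩
  have hneπ : (dset π v).Nonempty := ⟨_, hmemu⟩
  have hmπ := mem_dset.mp ((dset π v).min'_mem hneπ)
  have hcv : dcode π v = dcode σ v := congrFun h v
  have hneσ : (dset σ v).Nonempty := by
    by_contra hc
    have h0 : (dcode σ v).1 = 0 := dcode_val_neg σ v hc
    have h1 : (dcode π v).1 = (π ((dset π v).min' hneπ)).1 + 1 := dcode_val_pos π v hneπ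
    rw [hcv, h0] at h1
    omega
  have hmσ := mem_dset.mp ((dset σ v).min'_mem hneσ)
  set j₀ := (dset π v).min' hneπ with hj₀
  set j₁ := (dset σ v).min' hneσ with hj₁
  have hbval : (π j₀).1 + 1 = (σ j₁).1 + 1 := by
    have h1 := dcode_val_pos π v hneπ
    have h2 := dcode_val_pos σ v hneσ
    rw [hcv] at h1
    rw [← h1, h2]
  have hbb : π j₀ = σ j₁ := Fin.ext (by omega)
  set b := π j₀ with hbdef
  have hσb : σ.symm b = j₁ := by rw [hbb]; exact σ.symm_apply_apply j₁
  have hπb : π.symm b = j₀ := π.symm_apply_apply j₀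
  have hbltv : b < v := hmπ.2
  rcases eq_or_ne b u with rfl | hbu
  · -- b = u : contradiction with hσ
    rw [hσb] at hσ
    exact absurd hmσ.1 (not_lt.mpr (le_of_lt hσ))
  · -- π-side : b strictly before u in π
    have hπorder : π.symm b < π.symm u := by
      rw [hπb]
      have hle : j₀ ≤ π.symm u := Finset.min'_le _ _ hmemu
      refine lt_of_le_of_ne hle ?_
      intro he
      apply hbu
      rw [hbdef, he, π.apply_symm_apply]
    -- σ-side : u strictly before b in σ
    have hσorder : σ.symm u < σ.symm b := by
      rw [hσb]
      exact lt_trans hσ hmσ.1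
    rcases lt_or_gt_of_ne hbu with hlt | hgt
    · -- b < u, pair (b, u) with u < v
      have := (hmin u b hlt hu).mp hπorder
      exact absurd this (not_lt.mpr (le_of_lt hσorder))
    · -- u < b, pair (u, b) with b < v
      have := (hmin b u hgt hbltv).mpr hσorder
      exact absurd this (not_lt.mpr (le_of_lt hπorder))

lemma dcode_inj {n : ℕ} : Function.Injective (dcode (n := n)) := by
  intro π σ h
  by_contra hne
  have hall : ¬ ∀ u v : Fin n, u < v →
      ((π.symm u < π.symm v) ↔ (σ.symm u < σ.symm v)) := by
    intro hOrd
    apply hne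
    have full : ∀ u v : Fin n, (π.symm u < π.symm v) ↔ (σ.symm u < σ.symm v) := by
      intro u v
      rcases lt_trichotomy u v with h' | rfl | h'
      · exact hOrd u v h'
      · simp
      · have hiff := hOrd v u h'
        have hne2 : u ≠ v := ne_of_gt h'
        constructor
        · intro hlt
          have h1 : ¬ σ.symm v < σ.symm u := fun hc =>
            absurd (hiff.mpr hc) (not_lt.mpr (le_of_lt hlt))
          refine lt_of_le_of_ne (not_lt.mp h1) ?_
          intro he
          exact hne2 (σ.symm.injective he)
        · intro hlt
          have h1 : ¬ π.symm v < π.symm u := fun hc =>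
            absurd (hiff.mp hc) (not_lt.mpr (le_of_lt hlt))
          refine lt_of_le_of_ne (not_lt.mp h1) ?_
          intro he
          exact hne2 (π.symm.injective he)
    have hg : StrictMono (fun a => σ.symm (π a)) := by
      intro a b hab
      have := (full (π a) (π b)).mp (by simpa using hab)
      exact this
    have hrange : Set.range (fun a => σ.symm (π a)) = Set.range (id : Fin n → Fin n) := by
      rw [Set.range_id]
      exact (π.trans σ.symm).surjective.range_eq
    have hid := (hg.range_inj strictMono_id).mp hrange
    apply Equiv.ext
    intro a
    have := congrFun hid a
    simp only [id] at this
    have := congrArg σ this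
    rwa [σ.apply_symm_apply] at this
  push_neg at hall
  obtain ⟨u0, v0, huv0, hdif0⟩ := hall
  have hdif0' : ¬((π.symm u0 < π.symm v0) ↔ (σ.symm u0 < σ.symm v0)) := by
    intro hiff
    rcases hdif0 with ⟨a, b⟩ | ⟨a, b⟩
    · exact absurd (hiff.mp a) (not_lt.mpr b)
    · exact absurd (hiff.mpr b) (not_lt.mpr a)
  have hVs : (univ.filter fun v : Fin n => ∃ u, u < v ∧
      ¬((π.symm u < π.symm v) ↔ (σ.symm u < σ.symm v))).Nonempty :=
    ⟨v0, by
      simp only [Finset.mem_filter, Finset.mem_univ, true_and]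
      exact ⟨u0, huv0, hdif0'⟩⟩
  obtain ⟨vm, hvmdef⟩ : ∃ vm, (univ.filter fun v : Fin n => ∃ u, u < v ∧
      ¬((π.symm u < π.symm v) ↔ (σ.symm u < σ.symm v))).min' hVs = vm := ⟨_, rfl⟩
  have hvmem := Finset.min'_mem _ hVs
  rw [hvmdef] at hvmem
  rw [Finset.mem_filter] at hvmem
  obtain ⟨-, u, hu, hdif⟩ := hvmem
  have hmin : ∀ v' u' : Fin n, u' < v' → v' < vm →
      ((π.symm u' < π.symm v') ↔ (σ.symm u' < σ.symm v')) := by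
    intro v' u' h1 h2
    by_contra hc
    have hmem : v' ∈ univ.filter fun v : Fin n => ∃ u, u < v ∧
        ¬((π.symm u < π.symm v) ↔ (σ.symm u < σ.symm v)) := by
      rw [Finset.mem_filter]
      exact ⟨Finset.mem_univ _, u', h1, hc⟩
    have := Finset.min'_le _ _ hmem
    rw [hvmdef] at this
    exact absurd this (not_le.mpr h2)
  have hneuv : π.symm u ≠ π.symm vm := fun he => (ne_of_lt hu) (π.symm.injective he)
  rcases lt_or_gt_of_ne hneuv with hlt | hgt
  · -- π.symm u < π.symm vm : LHS of iff true, so RHS false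
    have hσside : ¬ (σ.symm u < σ.symm vm) := fun hc => hdif ⟨fun _ => hc, fun _ => hlt⟩
    have hσne : σ.symm u ≠ σ.symm vm := fun he => (ne_of_lt hu) (σ.symm.injective he)
    have hσlt : σ.symm vm < σ.symm u := lt_of_le_of_ne (not_lt.mp hσside) (Ne.symm hσne)
    exact dcode_aux σ π h.symm vm u hu hσlt hlt
      (fun v' u' h1 h2 => (hmin v' u' h1 h2).symm)
  · -- π.symm vm < π.symm u : LHS false, RHS must be true
    have hσside : σ.symm u < σ.symm vm := by
      by_contra hc
      exact hdif ⟨fun hl => absurd hl (not_lt.mpr (le_of_lt hgt)), fun hs => absurd hs hc⟩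
    exact dcode_aux π σ h vm u hu hgt hσside hmin
lemma image_code_eq {n : ℕ} (f : Equiv.Perm (Fin n) → (Fin n → Fin n))
    (hinj : Function.Injective f) (hmem : ∀ π, f π ∈ InvSeqs n) :
    univ.image f = InvSeqs n := by
  apply Finset.eq_of_subset_of_card_le
  · intro s hs
    obtain ⟨π, -, rfl⟩ := Finset.mem_image.mp hs
    exact hmem π
  · rw [card_invSeqs, Finset.card_image_of_injective _ hinj, Finset.card_univ,
      Fintype.card_perm, Fintype.card_fin]

lemma count_eq {n k : ℕ} (f : Equiv.Perm (Fin n) → (Fin n → Fin n))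
    (hinj : Function.Injective f) (hmem : ∀ π, f π ∈ InvSeqs n)
    (stat : (Fin n → Fin n) → ℕ)
    (hstat : ∀ π, stat (f π) = desP π) :
    ((InvSeqs n).filter fun s => stat s = k).card =
      (univ.filter fun π : Equiv.Perm (Fin n) => desP π = k).card := by
  rw [← image_code_eq f hinj hmem, Finset.filter_image,
    Finset.card_image_of_injective _ hinj]
  congr 1
  apply Finset.filter_congr
  intro π _
  rw [hstat]

/-- `asc` and `dist` are equidistributed over `Iₙ`, and both are Eulerian. -/
theorem asc_dist_eulerian (n k : ℕ) :
    ((InvSeqs n).filter fun s => ascI s = k).card =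
      ((InvSeqs n).filter fun s => distI s = k).card ∧
    ((InvSeqs n).filter fun s => ascI s = k).card =
      (univ.filter fun π : Equiv.Perm (Fin n) => desP π = k).card := by
  have h1 : ((InvSeqs n).filter fun s => ascI s = k).card =
      (univ.filter fun π : Equiv.Perm (Fin n) => desP π = k).card :=
    count_eq lcode lcode_inj lcode_mem ascI asc_lcode
  have h2 : ((InvSeqs n).filter fun s => distI s = k).card =
      (univ.filter fun π : Equiv.Perm (Fin n) => desP π = k).card :=
    count_eq dcode dcode_inj dcode_mem distI dist_dcode
  exact ⟨h1.trans h2.symm, h1⟩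
end

section
/- The statistic max (number of maximal entries, i.e., positions i with sᵢ = i−1) over inversion sequences of length n is a Stirling statistic: for every k, |{s ∈ Iₙ : max(s) = k}| equals the coefficient of x^k in x(x+1)⋯(x+n−1). -/
open Finset

/-- `max` on inversion sequences is a Stirling statistic. -/
theorem max_is_stirling (n k : ℕ) :
    ((InvSeqs n).filter fun s => maxI s = k).card =
      ((∏ j ∈ Finset.range n, (Polynomial.X + Polynomial.C j) : Polynomial ℕ)).coeff k := by
  by_cases hk : k ≤ n
  · rw [Finset.prod_X_add_C_coeff (Finset.range n) (fun j => j)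
      (by simpa using hk)]
    simp only [Finset.card_range]
    -- reindex RHS to subsets of Fin n
    have hre : ∑ t ∈ (Finset.range n).powersetCard (n - k), ∏ i ∈ t, i
        = ∑ T ∈ (univ : Finset (Fin n)).powersetCard (n - k), ∏ i ∈ T, (i : ℕ) := by
      rw [← Nat.Iio_eq_range, ← Fin.map_valEmbedding_univ, Finset.powersetCard_map,
        Finset.sum_map]
      refine Finset.sum_congr rfl fun T _ => ?_
      rw [show (Finset.mapEmbedding Fin.valEmbedding).toEmbedding T = T.map Fin.valEmbedding from Finset.mapEmbedding_apply, Finset.prod_map]; rfl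
    rw [hre]
    set D : (Fin n → Fin n) → Finset (Fin n) :=
      fun s => univ.filter fun i => ¬ ((s i : ℕ) = i.1) with hD
    have hcardD : ∀ s : Fin n → Fin n, maxI s + (D s).card = n := by
      intro s
      rw [hD, maxI, Finset.card_filter_add_card_filter_not]
      simp
    have hmem : ∀ s ∈ (InvSeqs n).filter fun s => maxI s = k,
        D s ∈ (univ : Finset (Fin n)).powersetCard (n - k) := by
      intro s hs
      rw [Finset.mem_filter] at hs
      rw [Finset.mem_powersetCard]
      refine ⟨Finset.subset_univ _, ?_⟩
      have := hcardD s
      omega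
    rw [Finset.card_eq_sum_card_fiberwise hmem]
    refine Finset.sum_congr rfl fun T hT => ?_
    rw [Finset.mem_powersetCard] at hT
    -- fiber = piFinset
    have hfib : ((InvSeqs n).filter fun s => maxI s = k).filter (fun s => D s = T)
        = Fintype.piFinset (fun i : Fin n =>
            if i ∈ T then univ.filter (· < i) else {i}) := by
      ext s
      simp only [Finset.mem_filter, Fintype.mem_piFinset, InvSeqs, Finset.mem_univ,
        true_and]
      constructor
      · rintro ⟨⟨hle, hmax⟩, hDs⟩
        intro i
        by_cases hi : i ∈ T
        · simp only [hi, if_true, Finset.mem_filter, Finset.mem_univ, true_and]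
          rw [← hDs, hD] at hi
          simp only [Finset.mem_filter, Finset.mem_univ, true_and] at hi
          have := hle i
          exact Fin.lt_def.mpr (lt_of_le_of_ne this hi)
        · simp only [hi, if_false, Finset.mem_singleton]
          rw [← hDs, hD] at hi
          simp only [Finset.mem_filter, Finset.mem_univ, true_and, not_not] at hi
          exact Fin.ext hi
      · intro h
        have hle : ∀ i : Fin n, (s i : ℕ) ≤ i.1 := by
          intro i
          have := h i
          by_cases hi : i ∈ T
          · simp only [hi, if_true, Finset.mem_filter] at this
            exact le_of_lt (Fin.lt_def.mp this.2)
          · simp only [hi, if_false, Finset.mem_singleton] at this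
            simp [this]
        have hDT : D s = T := by
          rw [hD]; ext i
          simp only [Finset.mem_filter, Finset.mem_univ, true_and]
          have := h i
          by_cases hi : i ∈ T
          · simp only [hi, if_true, Finset.mem_filter] at this
            have := Fin.lt_def.mp this.2
            simp only [hi, iff_true]; omega
          · simp only [hi, if_false, Finset.mem_singleton] at this
            simp only [hi, iff_false, not_not, this]
        refine ⟨⟨hle, ?_⟩, hDT⟩
        have := hcardD s
        rw [hDT, hT.2] at this
        omega
    rw [hfib, Fintype.card_piFinset]
    have : ∀ i : Fin n, (if i ∈ T then univ.filter (· < i) else {i}).card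
        = if i ∈ T then (i : ℕ) else 1 := by
      intro i
      by_cases hi : i ∈ T
      · simp only [hi, if_true]
        have : univ.filter (· < i) = Finset.Iio i := by ext j; simp
        rw [this, Fin.card_Iio]
      · simp [hi]
    simp_rw [this]
    rw [Finset.prod_ite_mem, Finset.univ_inter]
  · push_neg at hk
    rw [Polynomial.coeff_eq_zero_of_natDegree_lt, Finset.card_eq_zero.mpr]
    · ext s
      simp only [Finset.mem_filter, Finset.notMem_empty, iff_false, not_and]
      intro _ hmax
      have : maxI s ≤ n := le_trans (Finset.card_filter_le _ _) (by simp)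
      omega
    · refine lt_of_le_of_lt (le_trans (Polynomial.natDegree_prod_le _ _) ?_) hk
      calc ∑ j ∈ Finset.range n, (Polynomial.X + Polynomial.C j : Polynomial ℕ).natDegree
          ≤ ∑ _j ∈ Finset.range n, 1 := Finset.sum_le_sum fun j _ => by
            calc (Polynomial.X + Polynomial.C j : Polynomial ℕ).natDegree = 1 := Polynomial.natDegree_X_add_C j
              _ ≤ 1 := le_refl _
        _ = n := by simp
end
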